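/- Let F u = Σ_{i=0}^n A^{(i)}(x_i) ∂_i u, where each A^{(i)} is a real-valued C¹ function depending only on the variable x_i, and let D u = Σ_{j=0}^n λ_j(x) e_j ∂_j u with real-valued C¹ coefficients, λ_0 ≠ 0, β_i := λ_i/λ_0 with β_i ≠ 0. If for every i = 1, …, n the scalar equation β_i (∂_i A^{(i)} − ∂_0 A^{(0)}) − Σ_{j=0}^n A^{(j)} ∂_j(β_i) = 0 holds on Ω, then F is associated to D: for every C² function u with values in A_n(2, α_j, γ_ij) satisfying Du = 0, one has D(F u) = 0. -/

import Mathlib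

open scoped BigOperators

/-- Partial derivative in the `k`-th coordinate direction. -/
noncomputable def pd {m : ℕ} {F : Type*} [NormedAddCommGroup F] [NormedSpace ℝ F]
    (k : Fin m) (u : (Fin m → ℝ) → F) (x : Fin m → ℝ) : F :=
  fderiv ℝ u x (Pi.single k 1)

/-- The generalized Cauchy–Riemann operator `Du = Σⱼ λⱼ(x) eⱼ ∂ⱼu` (with `e₀ = 1`). -/
noncomputable def Dop {n : ℕ} {A : Type*} [NormedRing A] [NormedAlgebra ℝ A]
    (lam : Fin (n + 1) → (Fin (n + 1) → ℝ) → ℝ) (e : Fin (n + 1) → A)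
    (u : (Fin (n + 1) → ℝ) → A) (x : Fin (n + 1) → ℝ) : A :=
  ∑ j, lam j x • (e j * pd j u x)

section helpers

variable {m : ℕ} {F : Type*} [NormedAddCommGroup F] [NormedSpace ℝ F]

lemma pd_congr_nhds {k : Fin m} {u v : (Fin m → ℝ) → F} {x : Fin m → ℝ}
    (h : u =ᶠ[nhds x] v) : pd k u x = pd k v x := by
  unfold pd; rw [h.fderiv_eq]

lemma pd_sum {ι : Type*} (s : Finset ι) {f : ι → (Fin m → ℝ) → F} {x : Fin m → ℝ}
    (h : ∀ i ∈ s, DifferentiableAt ℝ (f i) x) (k : Fin m) :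
    pd k (fun y => ∑ i ∈ s, f i y) x = ∑ i ∈ s, pd k (f i) x := by
  unfold pd; rw [fderiv_fun_sum h]; simp

lemma pd_smul {c : (Fin m → ℝ) → ℝ} {f : (Fin m → ℝ) → F} {x : Fin m → ℝ} (k : Fin m)
    (hc : DifferentiableAt ℝ c x) (hf : DifferentiableAt ℝ f x) :
    pd k (fun y => c y • f y) x = pd k c x • f x + c x • pd k f x := by
  unfold pd
  rw [fderiv_fun_smul hc hf]
  rw [ContinuousLinearMap.add_apply, ContinuousLinearMap.smul_apply,
    ContinuousLinearMap.smulRight_apply]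
  exact add_comm _ _

lemma pd_const_mul {A : Type*} [NormedRing A] [NormedAlgebra ℝ A]
    {f : (Fin m → ℝ) → A} {x : Fin m → ℝ} (k : Fin m) (a : A)
    (hf : DifferentiableAt ℝ f x) :
    pd k (fun y => a * f y) x = a * pd k f x := by
  unfold pd
  rw [fderiv_const_mul hf a]
  simp [smul_eq_mul]

lemma pd_comp_single {g : ℝ → ℝ} {x : Fin m → ℝ} (i k : Fin m)
    (hg : DifferentiableAt ℝ g (x i)) :
    pd k (fun y => g (y i)) x = if i = k then deriv g (x i) else 0 := by
  have hproj : HasFDerivAt (fun y : Fin m → ℝ => y i)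
      (ContinuousLinearMap.proj i : (Fin m → ℝ) →L[ℝ] ℝ) x :=
    (ContinuousLinearMap.proj i : (Fin m → ℝ) →L[ℝ] ℝ).hasFDerivAt
  have h : HasFDerivAt (fun y : Fin m → ℝ => g (y i))
      (deriv g (x i) • (ContinuousLinearMap.proj i : (Fin m → ℝ) →L[ℝ] ℝ)) x :=
    hg.hasDerivAt.comp_hasFDerivAt x hproj
  unfold pd
  rw [h.fderiv]
  simp [Pi.single_apply, mul_comm]

end helpers

/-- Given `Fu = Σᵢ A⁽ⁱ⁾(xᵢ)∂ᵢu` with each real C¹ coefficient `A⁽ⁱ⁾` depending only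
on `xᵢ`, if the scalar equations
`βᵢ(∂ᵢA⁽ⁱ⁾ - ∂₀A⁽⁰⁾) - Σⱼ A⁽ʲ⁾∂ⱼ(βᵢ) = 0` hold on `Ω` for `i = 1, …, n`
(where `βᵢ = λᵢ/λ₀ ≠ 0`), then `F` is associated to `D`: `Du = 0 ⟹ D(Fu) = 0`. -/
theorem associated_of_beta_conditions {n : ℕ} {A : Type*}
    [NormedRing A] [NormedAlgebra ℝ A] [FiniteDimensional ℝ A]
    (α : Fin (n + 1) → ℝ) (γ : Fin (n + 1) → Fin (n + 1) → ℝ)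
    (e : Fin (n + 1) → A) (he0 : e 0 = 1)
    (hsq : ∀ j, j ≠ 0 → e j * e j = algebraMap ℝ A (-(α j)))
    (hanti : ∀ i j, i ≠ 0 → j ≠ 0 → i ≠ j →
      e i * e j + e j * e i = algebraMap ℝ A (2 * γ i j))
    (lam : Fin (n + 1) → (Fin (n + 1) → ℝ) → ℝ)
    (hlam : ∀ j, ContDiff ℝ 1 (lam j))
    (Ω : Set (Fin (n + 1) → ℝ)) (hΩ : IsOpen Ω)
    (hlam0 : ∀ x ∈ Ω, lam 0 x ≠ 0)
    (hbeta : ∀ i : Fin (n + 1), ∀ x ∈ Ω, lam i x / lam 0 x ≠ 0)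
    (Aco : Fin (n + 1) → ℝ → ℝ)
    (hAco : ∀ i, ContDiff ℝ 1 (Aco i))
    (hcond : ∀ i : Fin (n + 1), i ≠ 0 → ∀ x ∈ Ω,
      (lam i x / lam 0 x) * (deriv (Aco i) (x i) - deriv (Aco 0) (x 0))
        - (∑ j, Aco j (x j) * pd j (fun y => lam i y / lam 0 y) x) = 0) :
    ∀ u : (Fin (n + 1) → ℝ) → A, ContDiffOn ℝ 2 u Ω →
      (∀ x ∈ Ω, Dop lam e u x = 0) →
      ∀ x ∈ Ω, Dop lam e (fun y => ∑ i, Aco i (y i) • pd i u y) x = 0 := by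
  intro u hu hDu x hx
  have hxΩ : Ω ∈ nhds x := hΩ.mem_nhds hx
  set L : Fin (n + 1) → ℝ := fun j => lam j x with hL
  have hL0 : L 0 ≠ 0 := hlam0 x hx
  -- basic differentiability facts
  have hu2 : ∀ y ∈ Ω, ContDiffAt ℝ 2 u y := fun y hy => hu.contDiffAt (hΩ.mem_nhds hy)
  have hud : ∀ y ∈ Ω, DifferentiableAt ℝ u y := fun y hy =>
    (hu2 y hy).differentiableAt (by norm_num)
  have hpd1 : ∀ (i : Fin (n + 1)), ∀ y ∈ Ω, ContDiffAt ℝ 1 (pd i u) y := by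
    intro i y hy
    have h1 : ContDiffAt ℝ 1 (fderiv ℝ u) y := (hu2 y hy).fderiv_right (by norm_num)
    exact h1.clm_apply contDiffAt_const
  have hpdd : ∀ (i : Fin (n + 1)), ∀ y ∈ Ω, DifferentiableAt ℝ (pd i u) y := fun i y hy =>
    (hpd1 i y hy).differentiableAt one_ne_zero
  have hlamd : ∀ (j : Fin (n + 1)) (y : Fin (n + 1) → ℝ), DifferentiableAt ℝ (lam j) y :=
    fun j y => ((hlam j).differentiable one_ne_zero).differentiableAt
  have hAcd : ∀ (i : Fin (n + 1)) (t : ℝ), DifferentiableAt ℝ (Aco i) t :=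
    fun i t => ((hAco i).differentiable one_ne_zero).differentiableAt
  have hAcompd : ∀ (i : Fin (n + 1)) (y : Fin (n + 1) → ℝ),
      DifferentiableAt ℝ (fun z => Aco i (z i)) y := by
    intro i y
    have hproj : DifferentiableAt ℝ (fun z : Fin (n + 1) → ℝ => z i) y :=
      (ContinuousLinearMap.proj i : (Fin (n + 1) → ℝ) →L[ℝ] ℝ).differentiableAt
    exact (hAcd i (y i)).comp y hproj
  -- second derivative symmetry
  have hsymm : ∀ i j : Fin (n + 1), pd i (pd j u) x = pd j (pd i u) x := by
    have hf'd : DifferentiableAt ℝ (fderiv ℝ u) x :=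
      ((hu2 x hx).fderiv_right (le_refl 2)).differentiableAt one_ne_zero
    have heven : ∀ᶠ y in nhds x, HasFDerivAt u (fderiv ℝ u y) y := by
      filter_upwards [hxΩ] with y hy
      exact (hud y hy).hasFDerivAt
    have hsym := second_derivative_symmetric_of_eventually heven hf'd.hasFDerivAt
    intro i j
    have hpdf : ∀ (k l : Fin (n + 1)),
        pd k (pd l u) x = fderiv ℝ (fderiv ℝ u) x (Pi.single k 1) (Pi.single l 1) := by
      intro k l
      show fderiv ℝ (fun y => fderiv ℝ u y (Pi.single l 1)) x (Pi.single k 1) = _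
      rw [fderiv_clm_apply hf'd (differentiableAt_const _)]
      simp
    rw [hpdf i j, hpdf j i]
    exact hsym _ _
  -- differentiating D u = 0
  have hDzero : ∀ i : Fin (n + 1),
      (∑ j, (pd i (lam j) x • (e j * pd j u x) + L j • (e j * pd i (pd j u) x))) = 0 := by
    intro i
    have h0 : pd i (Dop lam e u) x = 0 := by
      have hev : Dop lam e u =ᶠ[nhds x] (fun _ => 0) := by
        filter_upwards [hxΩ] with y hy
        exact hDu y hy
      rw [pd_congr_nhds hev]
      unfold pd
      simp
    rw [← h0]
    have hDe : Dop lam e u = fun y => ∑ j, lam j y • (e j * pd j u y) := rfl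
    rw [hDe, pd_sum (f := fun j y => lam j y • (e j * pd j u y)) Finset.univ (fun j _ =>
      (hlamd j x).smul ((hpdd j x hx).const_mul (e j))) i]
    refine Finset.sum_congr rfl fun j _ => ?_
    rw [pd_smul i (hlamd j x) ((hpdd j x hx).const_mul (e j)),
      pd_const_mul i (e j) (hpdd j x hx)]
  -- computing pd j of F u
  have hFd : ∀ (i : Fin (n + 1)), DifferentiableAt ℝ (fun y => Aco i (y i) • pd i u y) x :=
    fun i => (hAcompd i x).smul (hpdd i x hx)
  have hpdF : ∀ j : Fin (n + 1),
      pd j (fun y => ∑ i, Aco i (y i) • pd i u y) x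
        = deriv (Aco j) (x j) • pd j u x + ∑ i, Aco i (x i) • pd j (pd i u) x := by
    intro j
    rw [pd_sum Finset.univ (fun i _ => hFd i) j]
    have : ∀ i : Fin (n + 1), pd j (fun y => Aco i (y i) • pd i u y) x
        = (if i = j then deriv (Aco i) (x i) else 0) • pd i u x
          + Aco i (x i) • pd j (pd i u) x := by
      intro i
      rw [pd_smul j (hAcompd i x) (hpdd i x hx), pd_comp_single i j (hAcd i (x i))]
    simp only [this]
    rw [Finset.sum_add_distrib]
    congr 1
    simp
  -- D u = 0 at x
  have hDu0 : (∑ j, L j • (e j * pd j u x)) = 0 := hDu x hx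
  -- the scalar coefficients
  set c : Fin (n + 1) → ℝ := fun j =>
    L j * deriv (Aco j) (x j) - ∑ i, Aco i (x i) * pd i (lam j) x with hc
  -- key scalar identity: L 0 * c j = L j * c 0
  have hkey : ∀ j : Fin (n + 1), L 0 * c j = L j * c 0 := by
    intro j
    rcases eq_or_ne j 0 with rfl | hj
    · ring
    · -- derivative of beta j
      have hβ : ∀ k : Fin (n + 1),
          pd k (fun y => lam j y / lam 0 y) x
            = L j * (-(L 0 ^ 2)⁻¹ * pd k (lam 0) x) + (L 0)⁻¹ * pd k (lam j) x := by
        intro k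
        have hinv : HasFDerivAt (fun y => (lam 0 y)⁻¹)
            ((-(L 0 ^ 2)⁻¹) • fderiv ℝ (lam 0) x) x :=
          (hasDerivAt_inv hL0).comp_hasFDerivAt x (hlamd 0 x).hasFDerivAt
        have hmul : HasFDerivAt (fun y => lam j y * (lam 0 y)⁻¹)
            (lam j x • ((-(L 0 ^ 2)⁻¹) • fderiv ℝ (lam 0) x)
              + (L 0)⁻¹ • fderiv ℝ (lam j) x) x := by
          exact (hlamd j x).hasFDerivAt.mul hinv
        have heq : (fun y => lam j y / lam 0 y) = fun y => lam j y * (lam 0 y)⁻¹ := by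
          funext y; exact div_eq_mul_inv _ _
        rw [heq]
        show fderiv ℝ (fun y => lam j y * (lam 0 y)⁻¹) x (Pi.single k 1) = _
        rw [hmul.fderiv]
        simp [pd, smul_eq_mul, mul_assoc, hL]
      have hc0 := hcond j hj x hx
      simp only [hβ] at hc0
      have hsplit : ∑ i, Aco i (x i) *
          (L j * (-(L 0 ^ 2)⁻¹ * pd i (lam 0) x) + (L 0)⁻¹ * pd i (lam j) x)
          = L j * (-(L 0 ^ 2)⁻¹) * (∑ i, Aco i (x i) * pd i (lam 0) x)
            + (L 0)⁻¹ * (∑ i, Aco i (x i) * pd i (lam j) x) := by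
        rw [Finset.mul_sum, Finset.mul_sum, ← Finset.sum_add_distrib]
        exact Finset.sum_congr rfl fun i _ => by ring
      rw [hsplit] at hc0
      simp only [hc]
      set S0 := ∑ i, Aco i (x i) * pd i (lam 0) x
      set Sj := ∑ i, Aco i (x i) * pd i (lam j) x
      have hL2 : (L 0 : ℝ) ^ 2 ≠ 0 := pow_ne_zero 2 hL0
      have h2 : L 0 ^ 2 * (L 0 * (L j * deriv (Aco j) (x j) - Sj))
          = L 0 ^ 2 * (L j * (L 0 * deriv (Aco 0) (x 0) - S0)) := by
        simp only [hL] at hc0 ⊢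
        field_simp at hc0
        have hN := (div_eq_zero_iff.mp hc0).resolve_right (pow_ne_zero 2 hL0)
        linear_combination (lam 0 x ^ 2) * hN
      exact mul_left_cancel₀ hL2 h2
  -- computing D (F u) at x
  have hmain : Dop lam e (fun y => ∑ i, Aco i (y i) • pd i u y) x
      = ∑ j, c j • (e j * pd j u x) := by
    show (∑ j, L j • (e j * pd j (fun y => ∑ i, Aco i (y i) • pd i u y) x)) = _
    have hterm : ∀ j : Fin (n + 1),
        L j • (e j * pd j (fun y => ∑ i, Aco i (y i) • pd i u y) x)
          = (L j * deriv (Aco j) (x j)) • (e j * pd j u x)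
            + ∑ i, Aco i (x i) • (L j • (e j * pd j (pd i u) x)) := by
      intro j
      rw [hpdF j]
      rw [mul_add, smul_add, mul_smul_comm, smul_smul, Finset.mul_sum, Finset.smul_sum]
      congr 1
      refine Finset.sum_congr rfl fun i _ => ?_
      rw [mul_smul_comm, smul_comm]
    simp only [hterm]
    rw [Finset.sum_add_distrib]
    have hswap : (∑ j, ∑ i, Aco i (x i) • (L j • (e j * pd j (pd i u) x)))
        = ∑ i, Aco i (x i) • (∑ j, L j • (e j * pd i (pd j u) x)) := by
      rw [Finset.sum_comm]
      refine Finset.sum_congr rfl fun i _ => ?_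
      rw [Finset.smul_sum]
      refine Finset.sum_congr rfl fun j _ => ?_
      rw [hsymm i j]
    rw [hswap]
    have hinner : ∀ i : Fin (n + 1),
        (∑ j, L j • (e j * pd i (pd j u) x))
          = - ∑ j, pd i (lam j) x • (e j * pd j u x) := by
      intro i
      have h := hDzero i
      rw [Finset.sum_add_distrib] at h
      exact eq_neg_of_add_eq_zero_right h
    simp only [hinner, smul_neg]
    rw [Finset.sum_neg_distrib]
    have hrw : (∑ i, Aco i (x i) • (∑ j, pd i (lam j) x • (e j * pd j u x)))
        = ∑ j, (∑ i, Aco i (x i) * pd i (lam j) x) • (e j * pd j u x) := by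
      simp only [Finset.smul_sum, smul_smul]
      rw [Finset.sum_comm]
      exact Finset.sum_congr rfl fun j _ => (Finset.sum_smul).symm
    rw [hrw, ← sub_eq_add_neg, ← Finset.sum_sub_distrib]
    refine Finset.sum_congr rfl fun j _ => ?_
    rw [hc, sub_smul]
  -- conclusion
  rw [hmain]
  have h1 : L 0 • (∑ j, c j • (e j * pd j u x)) = 0 := by
    rw [Finset.smul_sum]
    have h2 : ∀ j : Fin (n + 1), L 0 • (c j • (e j * pd j u x))
        = c 0 • (L j • (e j * pd j u x)) := by
      intro j
      rw [smul_smul, smul_smul, hkey j, mul_comm]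
    simp only [h2]
    rw [← Finset.smul_sum, hDu0, smul_zero]
  have h3 := congrArg (fun v : A => (L 0)⁻¹ • v) h1
  simpa [smul_smul, inv_mul_cancel₀ hL0] using h3
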